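/- arXiv:1705.05626 — 2 statements merged into one kernel-verified Lean document; each statement's English description precedes it below -/
import Mathlib

section
/- Let (t_n) be a sequence of positive reals whose counting function satisfies N(t+1) − N(t) ≤ C t² for all t ≥ 1 (and N(1) ≤ C). Then for Y ≥ 1, ∫_0^∞ ( ∑_{n : t < t_n < t+1, t_n > Y} (1 + t_n²)^{-3/2} )² dt ≤ C'/Y for a constant C' depending only on C. -/
open MeasureTheory

theorem gallagher_integral_tail_bound (C : ℝ) (hC : 0 < C) :
    ∃ C' > 0, ∀ (t : ℕ → ℝ), (∀ n, 0 < t n) →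
      ∀ (hfin : ∀ T : ℝ, {n | t n ≤ T}.Finite),
        ((hfin 1).toFinset.card : ℝ) ≤ C →
        (∀ u : ℝ, 1 ≤ u →
          ((hfin (u + 1)).toFinset.card : ℝ) ≤ ((hfin u).toFinset.card : ℝ) + C * u ^ 2) →
        ∀ Y : ℝ, 1 ≤ Y →
          ∫ u in Set.Ioi (0 : ℝ),
            (∑' n : ℕ, if u < t n ∧ t n < u + 1 ∧ Y < t n
              then (1 + (t n) ^ 2) ^ (-(3 : ℝ) / 2) else 0) ^ 2
            ≤ C' / Y := by
  classical
  refine ⟨8 * C ^ 2, by positivity, ?_⟩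
  intro t ht hfin h1 hstep Y hY
  have hY0 : (0 : ℝ) < Y := by linarith
  set f : ℝ → ℝ := fun u => ∑' n : ℕ, if u < t n ∧ t n < u + 1 ∧ Y < t n
      then (1 + (t n) ^ 2) ^ (-(3 : ℝ) / 2) else 0 with hfdef
  set g : ℝ → ℝ := fun u => (2 * C / max u Y) ^ 2 with hgdef
  have hf0 : ∀ u, 0 ≤ f u := by
    intro u
    apply tsum_nonneg
    intro n
    split_ifs with h
    · positivity
    · exact le_rfl
  -- Key pointwise bound
  have key : ∀ u : ℝ, 0 < u → f u ≤ 2 * C / max u Y := by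
    intro u hu
    set m : ℝ := max u Y with hm
    have hm1 : (1 : ℝ) ≤ m := le_max_of_le_right hY
    have hm0 : (0 : ℝ) < m := lt_of_lt_of_le one_pos hm1
    set P : ℕ → Prop := fun n => u < t n ∧ t n < u + 1 ∧ Y < t n with hP
    set F : Finset ℕ := (hfin (u + 1)).toFinset with hF
    set s : Finset ℕ := F.filter P with hs
    have hsum : f u = ∑ n ∈ s, (1 + (t n) ^ 2) ^ (-(3 : ℝ) / 2) := by
      have h0 : ∀ n ∉ s, (if u < t n ∧ t n < u + 1 ∧ Y < t n
          then (1 + (t n) ^ 2) ^ (-(3 : ℝ) / 2) else 0) = 0 := by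
        intro n hn
        by_cases hPn : P n
        · exact absurd (Finset.mem_filter.2
            ⟨(hfin (u + 1)).mem_toFinset.2 (show t n ≤ u + 1 from le_of_lt hPn.2.1), hPn⟩) hn
        · exact if_neg hPn
      calc f u = ∑ n ∈ s, (if u < t n ∧ t n < u + 1 ∧ Y < t n
          then (1 + (t n) ^ 2) ^ (-(3 : ℝ) / 2) else 0) := tsum_eq_sum h0
        _ = ∑ n ∈ s, (1 + (t n) ^ 2) ^ (-(3 : ℝ) / 2) :=
          Finset.sum_congr rfl fun n hn => if_pos ((Finset.mem_filter.1 hn).2)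
    have hterm : ∀ n ∈ s, (1 + (t n) ^ 2) ^ (-(3 : ℝ) / 2) ≤ (m ^ 3)⁻¹ := by
      intro n hn
      have hPn : P n := (Finset.mem_filter.1 hn).2
      have hmt : m ≤ t n := max_le hPn.1.le hPn.2.2.le
      have hsq : m ^ 2 ≤ 1 + (t n) ^ 2 := by
        have := pow_le_pow_left₀ hm0.le hmt 2
        linarith
      have h1' : (1 + (t n) ^ 2) ^ (-(3 : ℝ) / 2) ≤ (m ^ 2) ^ (-(3 : ℝ) / 2) :=
        Real.rpow_le_rpow_of_nonpos (by positivity) hsq (by norm_num)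
      have h2' : (m ^ 2 : ℝ) ^ (-(3 : ℝ) / 2) = (m ^ 3)⁻¹ := by
        rw [← Real.rpow_two, ← Real.rpow_mul hm0.le]
        norm_num
      rw [h2'] at h1'
      exact h1'
    have hcard : (s.card : ℝ) ≤ 2 * C * m ^ 2 := by
      rcases le_or_gt 1 u with hu1 | hu1
      · have hsub : s ∪ (hfin u).toFinset ⊆ F := by
          intro n hn
          rcases Finset.mem_union.1 hn with h | h
          · exact Finset.filter_subset _ _ h
          · have hh : t n ≤ u := (hfin u).mem_toFinset.1 h
            exact (hfin (u + 1)).mem_toFinset.2 (show t n ≤ u + 1 by linarith)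
        have hdisj : Disjoint s (hfin u).toFinset := by
          rw [Finset.disjoint_left]
          intro n hn hn'
          have h1'' : u < t n := (Finset.mem_filter.1 hn).2.1
          have h2'' : t n ≤ u := (hfin u).mem_toFinset.1 hn'
          linarith
        have hcc := Finset.card_le_card hsub
        rw [Finset.card_union_of_disjoint hdisj] at hcc
        have hreal : (s.card : ℝ) + ((hfin u).toFinset.card : ℝ)
            ≤ ((hfin (u + 1)).toFinset.card : ℝ) := by exact_mod_cast hcc
        have hst := hstep u hu1
        have hum : u ≤ m := le_max_left _ _
        have hupow : u ^ 2 ≤ m ^ 2 := pow_le_pow_left₀ (by linarith) hum 2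
        nlinarith [sq_nonneg m]
      · have hsub : s ⊆ (hfin 2).toFinset := by
          intro n hn
          have h2'' : t n < u + 1 := (Finset.mem_filter.1 hn).2.2.1
          exact (hfin 2).mem_toFinset.2 (show t n ≤ (2 : ℝ) by linarith)
        have hstep1 := hstep 1 le_rfl
        rw [show (1 : ℝ) + 1 = 2 by norm_num] at hstep1
        have h2c : ((hfin 2).toFinset.card : ℝ) ≤ 2 * C := by
          norm_num at hstep1; linarith
        have hcc : (s.card : ℝ) ≤ ((hfin 2).toFinset.card : ℝ) := by
          exact_mod_cast Finset.card_le_card hsub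
        have hm2 : (1 : ℝ) ≤ m ^ 2 := by nlinarith
        have h2cm : 2 * C ≤ 2 * C * m ^ 2 := by nlinarith
        linarith
    calc f u = ∑ n ∈ s, (1 + (t n) ^ 2) ^ (-(3 : ℝ) / 2) := hsum
      _ ≤ ∑ _n ∈ s, (m ^ 3)⁻¹ := Finset.sum_le_sum hterm
      _ = (s.card : ℝ) * (m ^ 3)⁻¹ := by rw [Finset.sum_const, nsmul_eq_mul]
      _ ≤ (2 * C * m ^ 2) * (m ^ 3)⁻¹ :=
          mul_le_mul_of_nonneg_right hcard (by positivity)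
      _ = 2 * C / m := by field_simp
  -- Integrability of g
  have hgc : Continuous g := by
    apply Continuous.pow
    exact continuous_const.div (continuous_id.max continuous_const)
      fun x => ne_of_gt (lt_of_lt_of_le hY0 (le_max_right x Y))
  have hint1 : IntegrableOn g (Set.Ioc 0 Y) := hgc.integrableOn_Ioc
  have heq2 : Set.EqOn (fun u : ℝ => (2 * C) ^ 2 * u ^ (-2 : ℝ)) g (Set.Ioi Y) := by
    intro x hx
    have hx0 : (0 : ℝ) < x := lt_trans hY0 hx
    have hxm : max x Y = x := max_eq_left (le_of_lt hx)
    simp only [hgdef, hxm]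
    rw [Real.rpow_neg hx0.le, Real.rpow_two, div_pow]
    field_simp
  have hbase : IntegrableOn (fun u : ℝ => (2 * C) ^ 2 * u ^ (-2 : ℝ)) (Set.Ioi Y) :=
    (integrableOn_Ioi_rpow_of_lt (by norm_num) hY0).const_mul _
  have hint2 : IntegrableOn g (Set.Ioi Y) := hbase.congr_fun heq2 measurableSet_Ioi
  have hsplit : Set.Ioc 0 Y ∪ Set.Ioi Y = Set.Ioi (0 : ℝ) :=
    Set.Ioc_union_Ioi_eq_Ioi hY0.le
  have hgint : IntegrableOn g (Set.Ioi 0) := by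
    rw [← hsplit]; exact hint1.union hint2
  -- Value of the integral of g
  have hI1 : ∫ u in Set.Ioc (0 : ℝ) Y, g u = Y * (2 * C / Y) ^ 2 := by
    rw [setIntegral_congr_fun measurableSet_Ioc (g := fun _ => (2 * C / Y) ^ 2)
      (fun x hx => by simp only [hgdef]; rw [max_eq_right hx.2])]
    rw [setIntegral_const, Real.volume_real_Ioc_of_le hY0.le, sub_zero, smul_eq_mul]
  have hI2 : ∫ u in Set.Ioi Y, g u = (2 * C) ^ 2 * Y⁻¹ := by
    rw [setIntegral_congr_fun measurableSet_Ioi heq2.symm]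
    rw [integral_const_mul, integral_Ioi_rpow_of_lt (by norm_num) hY0]
    norm_num [Real.rpow_neg_one]
  have hIg : ∫ u in Set.Ioi (0 : ℝ), g u = 8 * C ^ 2 / Y := by
    rw [← hsplit, setIntegral_union (Set.Ioc_disjoint_Ioi le_rfl) measurableSet_Ioi
      hint1 hint2, hI1, hI2]
    field_simp
    ring
  -- conclude
  have hmono : ∫ u in Set.Ioi (0 : ℝ), (f u) ^ 2 ≤ ∫ u in Set.Ioi (0 : ℝ), g u := by
    apply integral_mono_of_nonneg
    · exact Filter.Eventually.of_forall fun u => sq_nonneg _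
    · exact hgint
    · rw [Filter.EventuallyLE, ae_restrict_iff' measurableSet_Ioi]
      refine Filter.Eventually.of_forall fun u hu => ?_
      calc f u ^ 2 ≤ (2 * C / max u Y) ^ 2 := pow_le_pow_left₀ (hf0 u) (key u hu) 2
        _ = g u := rfl
  calc ∫ u in Set.Ioi (0 : ℝ), (f u) ^ 2 ≤ ∫ u in Set.Ioi (0 : ℝ), g u := hmono
    _ = 8 * C ^ 2 / Y := hIg
end

section
/- If ψ₀ : ℝ → ℝ is nondecreasing and ψ₃(x) = ∫_0^x ∫_0^{t} ∫_0^{v} ψ₀(u) du dv dt is its threefold integral, then for every x and h > 0: h^{-3}·Δ₃⁻ψ₃(x) ≤ ψ₀(x) ≤ h^{-3}·Δ₃⁺ψ₃(x), where Δ₃⁺ψ₃(x) = ψ₃(x+3h) − 3ψ₃(x+2h) + 3ψ₃(x+h) − ψ₃(x) and Δ₃⁻ψ₃(x) = ψ₃(x) − 3ψ₃(x−h) + 3ψ₃(x−2h) − ψ₃(x−3h). -/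
open MeasureTheory intervalIntegral

theorem third_difference_sandwich
    (ψ₀ ψ₁ ψ₂ ψ₃ : ℝ → ℝ) (hmono : Monotone ψ₀)
    (hloc : LocallyIntegrable ψ₀) (hzero : ∀ x ≤ (0:ℝ), ψ₀ x = 0)
    (hψ₁ : ∀ x, ψ₁ x = ∫ u in (0:ℝ)..x, ψ₀ u)
    (hψ₂ : ∀ x, ψ₂ x = ∫ v in (0:ℝ)..x, ψ₁ v)
    (hψ₃ : ∀ x, ψ₃ x = ∫ t in (0:ℝ)..x, ψ₂ t)
    (x h : ℝ) (hh : 0 < h) :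
    h ^ (-(3:ℤ)) * (ψ₃ x - 3 * ψ₃ (x - h) + 3 * ψ₃ (x - 2*h) - ψ₃ (x - 3*h)) ≤ ψ₀ x ∧
    ψ₀ x ≤ h ^ (-(3:ℤ)) * (ψ₃ (x + 3*h) - 3 * ψ₃ (x + 2*h) + 3 * ψ₃ (x + h) - ψ₃ x) := by
  -- integrability of ψ₀ on intervals
  have hint0 : ∀ a b : ℝ, IntervalIntegrable ψ₀ volume a b := fun a b =>
    hmono.intervalIntegrable
  -- ψ₁ continuous
  have hcont1 : Continuous ψ₁ := by
    have := intervalIntegral.continuous_primitive (f := ψ₀) (μ := volume) hint0 0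
    exact this.congr fun y => (hψ₁ y).symm
  have hint1 : ∀ a b : ℝ, IntervalIntegrable ψ₁ volume a b := fun a b =>
    hcont1.intervalIntegrable a b
  have hcont2 : Continuous ψ₂ := by
    have := intervalIntegral.continuous_primitive (f := ψ₁) (μ := volume) hint1 0
    exact this.congr fun y => (hψ₂ y).symm
  have hint2 : ∀ a b : ℝ, IntervalIntegrable ψ₂ volume a b := fun a b =>
    hcont2.intervalIntegrable a b
  -- differences as integrals
  have d3 : ∀ a b : ℝ, ψ₃ b - ψ₃ a = ∫ t in a..b, ψ₂ t := by
    intro a b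
    rw [hψ₃ a, hψ₃ b]
    exact intervalIntegral.integral_interval_sub_left (hint2 0 b) (hint2 0 a)
  have d2 : ∀ a b : ℝ, ψ₂ b - ψ₂ a = ∫ t in a..b, ψ₁ t := by
    intro a b
    rw [hψ₂ a, hψ₂ b]
    exact intervalIntegral.integral_interval_sub_left (hint1 0 b) (hint1 0 a)
  have d1 : ∀ a b : ℝ, ψ₁ b - ψ₁ a = ∫ t in a..b, ψ₀ t := by
    intro a b
    rw [hψ₁ a, hψ₁ b]
    exact intervalIntegral.integral_interval_sub_left (hint0 0 b) (hint0 0 a)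
  -- first difference of ψ₁ bounds
  have D1 : ∀ z : ℝ, h * ψ₀ z ≤ ψ₁ (z + h) - ψ₁ z ∧ ψ₁ (z + h) - ψ₁ z ≤ h * ψ₀ (z + h) := by
    intro z
    rw [d1 z (z + h)]
    have hzz : z ≤ z + h := by linarith
    constructor
    · have : (∫ t in z..(z+h), ψ₀ z) ≤ ∫ t in z..(z+h), ψ₀ t :=
        intervalIntegral.integral_mono_on hzz (intervalIntegrable_const) (hint0 z (z+h))
          (fun t ht => hmono ht.1)
      simpa [mul_comm] using this
    · have : (∫ t in z..(z+h), ψ₀ t) ≤ ∫ t in z..(z+h), ψ₀ (z+h) :=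
        intervalIntegral.integral_mono_on hzz (hint0 z (z+h)) (intervalIntegrable_const)
          (fun t ht => hmono ht.2)
      simpa [mul_comm] using this
  -- second difference of ψ₂ bounds
  have D2 : ∀ y : ℝ, h^2 * ψ₀ y ≤ ψ₂ (y + 2*h) - 2 * ψ₂ (y + h) + ψ₂ y ∧
      ψ₂ (y + 2*h) - 2 * ψ₂ (y + h) + ψ₂ y ≤ h^2 * ψ₀ (y + 2*h) := by
    intro y
    have key : ψ₂ (y + 2*h) - 2 * ψ₂ (y + h) + ψ₂ y
        = ∫ s in (0:ℝ)..h, (ψ₁ (s + (y + h)) - ψ₁ (s + y)) := by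
      have e1 : ψ₂ (y + 2*h) - ψ₂ (y + h) = ∫ s in (0:ℝ)..h, ψ₁ (s + (y + h)) := by
        rw [intervalIntegral.integral_comp_add_right (f := ψ₁) (y + h), zero_add]
        rw [d2 (y + h) (y + 2*h)]
        ring_nf
      have e2 : ψ₂ (y + h) - ψ₂ y = ∫ s in (0:ℝ)..h, ψ₁ (s + y) := by
        rw [intervalIntegral.integral_comp_add_right (f := ψ₁) y, zero_add]
        rw [d2 y (y + h)]
        ring_nf
      have isub : (∫ s in (0:ℝ)..h, (ψ₁ (s + (y + h)) - ψ₁ (s + y)))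
          = (∫ s in (0:ℝ)..h, ψ₁ (s + (y + h))) - ∫ s in (0:ℝ)..h, ψ₁ (s + y) := by
        apply intervalIntegral.integral_sub
        · exact (hcont1.comp (continuous_id.add continuous_const)).intervalIntegrable 0 h
        · exact (hcont1.comp (continuous_id.add continuous_const)).intervalIntegrable 0 h
      rw [isub, ← e1, ← e2]; ring
    rw [key]
    have h0h : (0:ℝ) ≤ h := le_of_lt hh
    have icont : ∀ c : ℝ, IntervalIntegrable (fun s => ψ₁ (s + (y+h)) - ψ₁ (s + y)) volume 0 h := by
      intro c
      exact ((hcont1.comp (continuous_id.add continuous_const)).sub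
        (hcont1.comp (continuous_id.add continuous_const))).intervalIntegrable 0 h
    constructor
    · have : (∫ s in (0:ℝ)..h, h * ψ₀ y) ≤ ∫ s in (0:ℝ)..h, (ψ₁ (s + (y + h)) - ψ₁ (s + y)) := by
        apply intervalIntegral.integral_mono_on h0h intervalIntegrable_const (icont 0)
        intro s hs
        have := (D1 (s + y)).1
        have h2 : ψ₀ y ≤ ψ₀ (s + y) := hmono (by linarith [hs.1])
        have : h * ψ₀ y ≤ ψ₁ (s + y + h) - ψ₁ (s + y) := le_trans (by nlinarith) this
        calc h * ψ₀ y ≤ ψ₁ (s + y + h) - ψ₁ (s + y) := this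
          _ = ψ₁ (s + (y + h)) - ψ₁ (s + y) := by ring_nf
      calc h^2 * ψ₀ y = (h - 0) • (h * ψ₀ y) := by simp; ring
        _ = ∫ s in (0:ℝ)..h, h * ψ₀ y := (intervalIntegral.integral_const _).symm
        _ ≤ _ := this
    · have : (∫ s in (0:ℝ)..h, (ψ₁ (s + (y + h)) - ψ₁ (s + y))) ≤ ∫ s in (0:ℝ)..h, h * ψ₀ (y + 2*h) := by
        apply intervalIntegral.integral_mono_on h0h (icont 0) intervalIntegrable_const
        intro s hs
        have := (D1 (s + y)).2
        have h2 : ψ₀ (s + y + h) ≤ ψ₀ (y + 2*h) := hmono (by linarith [hs.2])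
        calc ψ₁ (s + (y + h)) - ψ₁ (s + y) = ψ₁ (s + y + h) - ψ₁ (s + y) := by ring_nf
          _ ≤ h * ψ₀ (s + y + h) := this
          _ ≤ h * ψ₀ (y + 2*h) := by nlinarith
      calc _ ≤ ∫ s in (0:ℝ)..h, h * ψ₀ (y + 2*h) := this
        _ = (h - 0) • (h * ψ₀ (y + 2*h)) := intervalIntegral.integral_const _
        _ = h^2 * ψ₀ (y + 2*h) := by simp; ring
  -- third difference bounds
  have D3 : ∀ y : ℝ, h^3 * ψ₀ y ≤ ψ₃ (y + 3*h) - 3 * ψ₃ (y + 2*h) + 3 * ψ₃ (y + h) - ψ₃ y ∧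
      ψ₃ (y + 3*h) - 3 * ψ₃ (y + 2*h) + 3 * ψ₃ (y + h) - ψ₃ y ≤ h^3 * ψ₀ (y + 3*h) := by
    intro y
    have key : ψ₃ (y + 3*h) - 3 * ψ₃ (y + 2*h) + 3 * ψ₃ (y + h) - ψ₃ y
        = ∫ s in (0:ℝ)..h, (ψ₂ (s + (y + 2*h)) - 2 * ψ₂ (s + (y + h)) + ψ₂ (s + y)) := by
      have e1 : ψ₃ (y + 3*h) - ψ₃ (y + 2*h) = ∫ s in (0:ℝ)..h, ψ₂ (s + (y + 2*h)) := by
        rw [intervalIntegral.integral_comp_add_right (f := ψ₂) (y + 2*h), zero_add]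
        rw [d3 (y + 2*h) (y + 3*h)]; ring_nf
      have e2 : ψ₃ (y + 2*h) - ψ₃ (y + h) = ∫ s in (0:ℝ)..h, ψ₂ (s + (y + h)) := by
        rw [intervalIntegral.integral_comp_add_right (f := ψ₂) (y + h), zero_add]
        rw [d3 (y + h) (y + 2*h)]; ring_nf
      have e3 : ψ₃ (y + h) - ψ₃ y = ∫ s in (0:ℝ)..h, ψ₂ (s + y) := by
        rw [intervalIntegral.integral_comp_add_right (f := ψ₂) y, zero_add]
        rw [d3 y (y + h)]; ring_nf
      have i1 : IntervalIntegrable (fun s => ψ₂ (s + (y + 2*h))) volume 0 h :=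
        (hcont2.comp (continuous_id.add continuous_const)).intervalIntegrable 0 h
      have i2 : IntervalIntegrable (fun s => ψ₂ (s + (y + h))) volume 0 h :=
        (hcont2.comp (continuous_id.add continuous_const)).intervalIntegrable 0 h
      have i3 : IntervalIntegrable (fun s => ψ₂ (s + y)) volume 0 h :=
        (hcont2.comp (continuous_id.add continuous_const)).intervalIntegrable 0 h
      have isub : (∫ s in (0:ℝ)..h, (ψ₂ (s + (y + 2*h)) - 2 * ψ₂ (s + (y + h)) + ψ₂ (s + y)))
          = (∫ s in (0:ℝ)..h, ψ₂ (s + (y + 2*h)))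
            - 2 * (∫ s in (0:ℝ)..h, ψ₂ (s + (y + h)))
            + ∫ s in (0:ℝ)..h, ψ₂ (s + y) := by
        rw [intervalIntegral.integral_add ((i1.sub (i2.const_mul 2))) i3,
          intervalIntegral.integral_sub i1 (i2.const_mul 2),
          intervalIntegral.integral_const_mul]
      rw [isub, ← e1, ← e2, ← e3]; ring
    rw [key]
    have h0h : (0:ℝ) ≤ h := le_of_lt hh
    have icont : IntervalIntegrable
        (fun s => ψ₂ (s + (y + 2*h)) - 2 * ψ₂ (s + (y + h)) + ψ₂ (s + y)) volume 0 h := by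
      apply Continuous.intervalIntegrable
      exact ((hcont2.comp (continuous_id.add continuous_const)).sub
        (continuous_const.mul (hcont2.comp (continuous_id.add continuous_const)))).add
        (hcont2.comp (continuous_id.add continuous_const))
    constructor
    · have : (∫ s in (0:ℝ)..h, h^2 * ψ₀ y)
          ≤ ∫ s in (0:ℝ)..h, (ψ₂ (s + (y + 2*h)) - 2 * ψ₂ (s + (y + h)) + ψ₂ (s + y)) := by
        apply intervalIntegral.integral_mono_on h0h intervalIntegrable_const icont
        intro s hs
        have hd := (D2 (s + y)).1
        have h2 : ψ₀ y ≤ ψ₀ (s + y) := hmono (by linarith [hs.1])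
        have hh2 : (0:ℝ) ≤ h^2 := sq_nonneg h
        calc h^2 * ψ₀ y ≤ h^2 * ψ₀ (s + y) := by nlinarith
          _ ≤ ψ₂ (s + y + 2*h) - 2 * ψ₂ (s + y + h) + ψ₂ (s + y) := hd
          _ = ψ₂ (s + (y + 2*h)) - 2 * ψ₂ (s + (y + h)) + ψ₂ (s + y) := by ring_nf
      calc h^3 * ψ₀ y = (h - 0) • (h^2 * ψ₀ y) := by simp; ring
        _ = ∫ s in (0:ℝ)..h, h^2 * ψ₀ y := (intervalIntegral.integral_const _).symm
        _ ≤ _ := this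
    · have : (∫ s in (0:ℝ)..h, (ψ₂ (s + (y + 2*h)) - 2 * ψ₂ (s + (y + h)) + ψ₂ (s + y)))
          ≤ ∫ s in (0:ℝ)..h, h^2 * ψ₀ (y + 3*h) := by
        apply intervalIntegral.integral_mono_on h0h icont intervalIntegrable_const
        intro s hs
        have hd := (D2 (s + y)).2
        have h2 : ψ₀ (s + y + 2*h) ≤ ψ₀ (y + 3*h) := hmono (by linarith [hs.2])
        have hh2 : (0:ℝ) ≤ h^2 := sq_nonneg h
        calc ψ₂ (s + (y + 2*h)) - 2 * ψ₂ (s + (y + h)) + ψ₂ (s + y)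
            = ψ₂ (s + y + 2*h) - 2 * ψ₂ (s + y + h) + ψ₂ (s + y) := by ring_nf
          _ ≤ h^2 * ψ₀ (s + y + 2*h) := hd
          _ ≤ h^2 * ψ₀ (y + 3*h) := by nlinarith
      calc _ ≤ ∫ s in (0:ℝ)..h, h^2 * ψ₀ (y + 3*h) := this
        _ = (h - 0) • (h^2 * ψ₀ (y + 3*h)) := intervalIntegral.integral_const _
        _ = h^3 * ψ₀ (y + 3*h) := by simp; ring
  have hpow : h ^ (-(3:ℤ)) = (h^3)⁻¹ := by
    rw [zpow_neg, show ((3:ℤ)) = ((3:ℕ) : ℤ) from rfl, zpow_natCast]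
  have h3pos : (0:ℝ) < h^3 := by positivity
  constructor
  · rw [hpow, inv_mul_le_iff₀ h3pos]
    have := (D3 (x - 3*h)).2
    have e : x - 3*h + 3*h = x := by ring
    have e2 : x - 3*h + 2*h = x - h := by ring
    have e3 : x - 3*h + h = x - 2*h := by ring
    rw [e, e2, e3] at this
    linarith
  · rw [hpow, le_inv_mul_iff₀ h3pos]
    have := (D3 x).1
    linarith
end
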